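/- Let p be a prime, q ≥ 1 a natural number, and k a natural number with 1 < k < p; assume moreover that k ^ (p - 1) is not congruent to 1 modulo p² (equivalently, the multiplicative order of k modulo p² is p times its order modulo p). Then the multiplicative order of the unit determined by k in (ZMod (p ^ q))ˣ equals p ^ (q - 1) times the multiplicative order of the unit determined by k in (ZMod p)ˣ; equivalently, the cyclic subgroup of (ZMod (p ^ q))ˣ generated by k has cardinality p ^ (q - 1) times the cardinality of the cyclic subgroup of (ZMod p)ˣ generated by k. Moreover, a unit x ∈ (ZMod (p ^ q))ˣ lies in the subgroup generated by k if and only if its reduction modulo p (under the ring homomorphism ZMod (p ^ q) → ZMod p) lies in the subgroup of (ZMod p)ˣ generated by k. -/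

import Mathlib

private lemma pow_eq_one_iff_int_dvd (m k n : ℕ) :
    (k : ZMod m) ^ n = 1 ↔ (m : ℤ) ∣ (k : ℤ) ^ n - 1 := by
  rw [← Nat.cast_pow, ← Nat.cast_one, ZMod.natCast_eq_natCast_iff, Nat.ModEq.comm,
    Nat.modEq_iff_dvd]
  push_cast
  rfl

theorem stmt13 (p q k : ℕ) (hp : p.Prime) (hq : 1 ≤ q) (hk1 : 1 < k) (hkp : k < p)
    (hw : ¬ (k ^ (p - 1) ≡ 1 [MOD p ^ 2]))
    (u : (ZMod (p ^ q))ˣ) (hu : (u : ZMod (p ^ q)) = (k : ZMod (p ^ q)))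
    (v : (ZMod p)ˣ) (hv : (v : ZMod p) = (k : ZMod p)) :
    orderOf u = p ^ (q - 1) * orderOf v ∧
      Nat.card (Subgroup.zpowers u) = p ^ (q - 1) * Nat.card (Subgroup.zpowers v) ∧
      ∀ x : (ZMod (p ^ q))ˣ,
        x ∈ Subgroup.zpowers u ↔
          Units.map (ZMod.castHom (dvd_pow_self p (Nat.one_le_iff_ne_zero.mp hq))
              (ZMod p)).toMonoidHom x ∈ Subgroup.zpowers v := by
  haveI : Fact p.Prime := ⟨hp⟩
  haveI : NeZero (p ^ q) := ⟨pow_ne_zero q hp.pos.ne'⟩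
  have hp3 : 3 ≤ p := by omega
  have hodd : Odd p := hp.odd_of_ne_two (by omega)
  have hpZ : Prime (p : ℤ) := Nat.prime_iff_prime_int.mp hp
  have hpk : ¬ (p : ℤ) ∣ (k : ℤ) := by
    rw [Int.natCast_dvd_natCast]
    exact Nat.not_dvd_of_pos_of_lt (by omega) hkp
  set d := orderOf v with hd
  -- basic facts about v
  have hvpow : ∀ n : ℕ, v ^ n = 1 ↔ (p : ℤ) ∣ (k : ℤ) ^ n - 1 := by
    intro n
    rw [← pow_eq_one_iff_int_dvd p k n, ← hv, ← Units.val_pow_eq_pow_val]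
    exact ⟨fun h => by rw [h, Units.val_one], fun h => Units.ext (by rw [h, Units.val_one])⟩
  have hupow : ∀ n : ℕ, u ^ n = 1 ↔ ((p : ℤ)) ^ q ∣ (k : ℤ) ^ n - 1 := by
    intro n
    rw [show ((p : ℤ)) ^ q = ((p ^ q : ℕ) : ℤ) by push_cast; ring,
      ← pow_eq_one_iff_int_dvd (p ^ q) k n, ← hu, ← Units.val_pow_eq_pow_val]
    exact ⟨fun h => by rw [h, Units.val_one], fun h => Units.ext (by rw [h, Units.val_one])⟩
  have hd_dvd : d ∣ p - 1 := by
    have := orderOf_dvd_card (x := v)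
    rwa [ZMod.card_units_eq_totient, Nat.totient_prime hp] at this
  have hd1 : (p : ℤ) ∣ (k : ℤ) ^ d - 1 := (hvpow d).mp (pow_orderOf_eq_one v)
  have hd2 : ¬ (p : ℤ) ^ 2 ∣ (k : ℤ) ^ d - 1 := by
    intro hcon
    apply hw
    obtain ⟨m, hm⟩ := hd_dvd
    have hdvd2 : (p : ℤ) ^ 2 ∣ (k : ℤ) ^ (p - 1) - 1 := by
      refine hcon.trans ?_
      have := sub_dvd_pow_sub_pow ((k : ℤ) ^ d) 1 m
      rwa [one_pow, ← pow_mul, ← hm] at this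
    rw [Nat.ModEq.comm, Nat.modEq_iff_dvd]
    push_cast
    exact hdvd2
  have hmult1 : emultiplicity ((p : ℤ)) ((k : ℤ) ^ d - 1) = 1 := by
    rw [show ((1 : ℕ∞)) = ((1 : ℕ) : ℕ∞) by rfl, emultiplicity_eq_coe]
    constructor
    · simpa using hd1
    · simpa using hd2
  have hpkd : ¬ (p : ℤ) ∣ (k : ℤ) ^ d := fun h => hpk (hpZ.dvd_of_dvd_pow h)
  -- the key multiplicity computation
  have hmult : ∀ j : ℕ, emultiplicity ((p : ℤ)) ((k : ℤ) ^ (d * p ^ j) - 1) = (1 + j : ℕ) := by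
    intro j
    have := Int.emultiplicity_pow_sub_pow hp hodd (x := (k : ℤ) ^ d) (y := 1)
      (by simpa using hd1) hpkd (p ^ j)
    rw [one_pow, ← pow_mul, hmult1,
      emultiplicity_pow_self hp.pos.ne' hp.prime.not_isUnit j] at this
    rw [this]
    push_cast
    ring
  have hdpos : 0 < d := orderOf_pos v
  -- u ^ (d * p ^ (q-1)) = 1
  have hu1 : u ^ (d * p ^ (q - 1)) = 1 := by
    rw [hupow, pow_dvd_iff_le_emultiplicity, hmult (q - 1)]
    exact_mod_cast Nat.le_of_eq (by omega)
  have horder_dvd : orderOf u ∣ d * p ^ (q - 1) := orderOf_dvd_of_pow_eq_one hu1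
  -- d divides orderOf u
  have hduv : d ∣ orderOf u := by
    apply orderOf_dvd_of_pow_eq_one
    rw [hvpow]
    exact (dvd_pow_self (p : ℤ) (Nat.one_le_iff_ne_zero.mp hq)).trans
      ((hupow (orderOf u)).mp (pow_orderOf_eq_one u))
  have horder : orderOf u = p ^ (q - 1) * d := by
    obtain ⟨m, hm⟩ := hduv
    have hmdvd : m ∣ p ^ (q - 1) := by
      have : d * m ∣ d * p ^ (q - 1) := hm ▸ horder_dvd
      exact (mul_dvd_mul_iff_left hdpos.ne').mp this
    obtain ⟨j, hj, hjm⟩ := (Nat.dvd_prime_pow hp).mp hmdvd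
    have : ((p : ℤ)) ^ q ∣ (k : ℤ) ^ (d * p ^ j) - 1 := by
      rw [← hjm, ← hm]
      exact (hupow (orderOf u)).mp (pow_orderOf_eq_one u)
    rw [pow_dvd_iff_le_emultiplicity, hmult j, Nat.cast_le] at this
    have : j = q - 1 := by omega
    rw [hm, hjm, this, mul_comm]
  refine ⟨horder, ?_, ?_⟩
  · rw [Nat.card_zpowers, Nat.card_zpowers, horder]
  -- part 3
  set f := Units.map (ZMod.castHom (dvd_pow_self p (Nat.one_le_iff_ne_zero.mp hq))
      (ZMod p)).toMonoidHom with hf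
  have hfu : f u = v := by
    rw [Units.ext_iff]
    show (ZMod.castHom _ (ZMod p)) (u : ZMod (p ^ q)) = (v : ZMod p)
    rw [hu, map_natCast, hv]
  have hfwd : Subgroup.zpowers u ≤ Subgroup.comap f (Subgroup.zpowers v) := by
    rw [Subgroup.zpowers_le, Subgroup.mem_comap, hfu]
    exact Subgroup.mem_zpowers v
  have hfsurj : Function.Surjective f :=
    ZMod.unitsMap_surjective (dvd_pow_self p (Nat.one_le_iff_ne_zero.mp hq))
  have hcard : Nat.card (Subgroup.comap f (Subgroup.zpowers v)) = Nat.card (Subgroup.zpowers u) := by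
    have h1 := Subgroup.card_mul_index (Subgroup.comap f (Subgroup.zpowers v))
    have h2 := Subgroup.card_mul_index (Subgroup.zpowers v)
    have hG : Nat.card (ZMod (p ^ q))ˣ = p ^ (q - 1) * (p - 1) := by
      rw [Nat.card_eq_fintype_card, ZMod.card_units_eq_totient,
        Nat.totient_prime_pow hp (by omega)]
    have hG2 : Nat.card (ZMod p)ˣ = p - 1 := by
      rw [Nat.card_eq_fintype_card, ZMod.card_units_eq_totient, Nat.totient_prime hp]
    rw [Subgroup.index_comap_of_surjective _ hfsurj, hG] at h1
    rw [Nat.card_zpowers, hG2] at h2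
    have hine : (Subgroup.zpowers v).index ≠ 0 := Subgroup.index_ne_zero_of_finite
    rw [Nat.card_zpowers, horder]
    have : Nat.card (Subgroup.comap f (Subgroup.zpowers v)) * (Subgroup.zpowers v).index
        = (p ^ (q - 1) * d) * (Subgroup.zpowers v).index := by
      rw [h1, mul_assoc, h2]
    exact Nat.eq_of_mul_eq_mul_right (Nat.pos_of_ne_zero hine) this
  have heq : Subgroup.zpowers u = Subgroup.comap f (Subgroup.zpowers v) :=
    Subgroup.eq_of_le_of_card_ge hfwd (le_of_eq hcard)
  intro x
  rw [heq, Subgroup.mem_comap]
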